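/- Let G be a finite simple graph on Fin n, let d ≥ 1, r ≥ 1, and suppose there exists a fractional coloring of G of total weight at most d/r (i.e. χ_f(G) ≤ d/r). Then for every family Π : Fin n → Matrix (Fin d) (Fin d) ℂ of rank-r orthogonal projections realizing G, the vector x ∈ ℝ^n with components x_k = Re(tr(Π_k * ((1/d)·I))) lies in STAB(G); i.e., the maximally mixed state admits a noncontextual model for every such realization. -/

import Mathlib

open Matrix
open scoped ComplexOrder

/-- A finset of vertices is independent: no two of its vertices are adjacent. -/
def IsIndep {n : ℕ} (G : SimpleGraph (Fin n)) (s : Finset (Fin n)) : Prop :=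
  ∀ v ∈ s, ∀ u ∈ s, ¬ G.Adj v u

/-- Incidence vector of a finset of vertices. -/
def incVec {n : ℕ} (s : Finset (Fin n)) : Fin n → ℝ := fun v => if v ∈ s then 1 else 0

/-- STAB(G): the convex hull of the incidence vectors of the independent sets of `G`. -/
def STAB {n : ℕ} (G : SimpleGraph (Fin n)) : Set (Fin n → ℝ) :=
  convexHull ℝ {x | ∃ s : Finset (Fin n), IsIndep G s ∧ x = incVec s}

/-- A fractional coloring of `G`: nonnegative weights supported on independent sets,
covering every vertex with total weight at least 1. -/
def IsFracColoring {n : ℕ} (G : SimpleGraph (Fin n)) (w : Finset (Fin n) → ℝ) : Prop :=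
  (∀ s, 0 ≤ w s) ∧ (∀ s, w s ≠ 0 → IsIndep G s) ∧
    (∀ v : Fin n, 1 ≤ ∑ s : Finset (Fin n), if v ∈ s then w s else 0)

/-- Total weight of a weight assignment on independent sets. -/
def totalWeight {n : ℕ} (w : Finset (Fin n) → ℝ) : ℝ := ∑ s : Finset (Fin n), w s

/-- `P` is an orthogonal projection of rank `r`: Hermitian, idempotent, of rank `r`. -/
def IsProjOfRank {d : ℕ} (r : ℕ) (P : Matrix (Fin d) (Fin d) ℂ) : Prop :=
  P.IsHermitian ∧ P * P = P ∧ P.rank = r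

/-- A family of projectors realizes the orthogonality graph `G`:
adjacent vertices carry orthogonal projectors. -/
def Realizes {n d : ℕ} (G : SimpleGraph (Fin n)) (P : Fin n → Matrix (Fin d) (Fin d) ℂ) : Prop :=
  ∀ j k, G.Adj j k → P j * P k = 0

/-- The trace of a Hermitian idempotent matrix equals its rank. -/
lemma trace_eq_rank_of_proj {d : ℕ} (P : Matrix (Fin d) (Fin d) ℂ)
    (hH : P.IsHermitian) (hI : P * P = P) : P.trace = (P.rank : ℂ) := by
  set U : Matrix (Fin d) (Fin d) ℂ := (hH.eigenvectorUnitary : Matrix (Fin d) (Fin d) ℂ) with hU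
  set D : Matrix (Fin d) (Fin d) ℂ := diagonal (RCLike.ofReal ∘ hH.eigenvalues) with hDdef
  have hsU : star U * U = 1 := Unitary.coe_star_mul_self _
  have hUs : U * star U = 1 := Unitary.coe_mul_star_self _
  have hdiag : star U * P * U = D := by
    rw [hU, hDdef, ← hH.conjStarAlgAut_star_eigenvectorUnitary, Unitary.conjStarAlgAut_apply,
      Unitary.coe_star, star_star]
  have hD : D * D = D := by
    calc D * D = (star U * P * U) * (star U * P * U) := by rw [hdiag]
    _ = star U * (P * ((U * star U) * (P * U))) := by
          simp only [Matrix.mul_assoc]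
    _ = star U * (P * P) * U := by rw [hUs, Matrix.one_mul, Matrix.mul_assoc, Matrix.mul_assoc]
    _ = D := by rw [hI, hdiag]
  have hev : ∀ i, hH.eigenvalues i = 0 ∨ hH.eigenvalues i = 1 := by
    intro i
    have h := congrArg (fun M => M i i) hD
    simp only [hDdef, Matrix.diagonal_mul_diagonal, Matrix.diagonal_apply_eq,
      Function.comp_apply, Pi.mul_apply] at h
    have h' : hH.eigenvalues i * hH.eigenvalues i = hH.eigenvalues i := by exact_mod_cast h
    rcases mul_eq_zero.mp (by nlinarith [h'] :
        hH.eigenvalues i * (hH.eigenvalues i - 1) = 0) with h0 | h1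
    · exact Or.inl h0
    · exact Or.inr (by linarith)
  have htr : P.trace = D.trace := by
    have hst := hH.spectral_theorem
    rw [Unitary.conjStarAlgAut_apply, ← hU, ← hDdef] at hst
    rw [hst, Matrix.trace_mul_cycle, hsU, Matrix.one_mul]
  have hrank : P.rank = Fintype.card {i // hH.eigenvalues i ≠ 0} := hH.rank_eq_card_non_zero_eigs
  rw [htr, hrank, hDdef, Matrix.trace_diagonal, Fintype.card_subtype]
  have hsub : (Finset.univ.filter fun i => hH.eigenvalues i ≠ 0) ⊆ Finset.univ :=
    Finset.filter_subset _ _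
  rw [← Finset.sum_subset hsub (fun i _ hni => by
      simp only [Finset.mem_filter, Finset.mem_univ, true_and, not_not] at hni
      simp [hni])]
  have : ∀ i ∈ Finset.univ.filter fun i => hH.eigenvalues i ≠ 0,
      (RCLike.ofReal ∘ hH.eigenvalues) i = (1 : ℂ) := by
    intro i hi
    simp only [Finset.mem_filter] at hi
    rcases hev i with h0 | h1
    · exact absurd h0 hi.2
    · simp [h1]
  rw [Finset.sum_congr rfl this, Finset.sum_const, nsmul_eq_mul, mul_one]

lemma incVec_mem_STAB {n : ℕ} {G : SimpleGraph (Fin n)} {s : Finset (Fin n)}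
    (h : IsIndep G s) : incVec s ∈ STAB G :=
  subset_convexHull ℝ _ ⟨s, h, rfl⟩

/-- STAB is stable under scaling one coordinate by a factor in `[0,1]`. -/
lemma STAB_scale_coord {n : ℕ} (G : SimpleGraph (Fin n)) (v : Fin n) (t : ℝ)
    (ht0 : 0 ≤ t) (ht1 : t ≤ 1) {x : Fin n → ℝ} (hx : x ∈ STAB G) :
    Function.update x v (t * x v) ∈ STAB G := by
  set f : (Fin n → ℝ) → (Fin n → ℝ) := fun y => Function.update y v (t * y v) with hf
  have hlin : IsLinearMap ℝ f := by
    constructor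
    · intro a b
      funext w
      by_cases h : w = v
      · subst h; simp [hf, Function.update_self]; ring
      · simp [hf, Function.update_of_ne h]
    · intro c a
      funext w
      by_cases h : w = v
      · subst h; simp [hf, Function.update_self]; ring
      · simp [hf, Function.update_of_ne h]
  have himg : f x ∈ f '' (STAB G) := ⟨x, hx, rfl⟩
  rw [STAB, hlin.image_convexHull] at himg
  refine convexHull_min ?_ (convex_convexHull ℝ _) himg
  rintro _ ⟨_, ⟨s, hs, rfl⟩, rfl⟩
  have hkey : f (incVec s) = t • incVec s + (1 - t) • incVec (s.erase v) := by
    funext w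
    by_cases h : w = v
    · subst h
      by_cases hv : w ∈ s <;>
        simp [hf, Function.update_self, incVec, Finset.mem_erase, hv]
    · simp only [hf, Function.update_of_ne h, incVec, Pi.add_apply, Pi.smul_apply,
        smul_eq_mul, Finset.mem_erase, h]
      by_cases hw : w ∈ s <;> simp [hw, h]
  rw [hkey]
  have h1 : incVec s ∈ STAB G := incVec_mem_STAB hs
  have h2 : incVec (s.erase v) ∈ STAB G := incVec_mem_STAB
    (fun a ha b hb => hs a (Finset.mem_of_mem_erase ha) b (Finset.mem_of_mem_erase hb))
  exact (convex_convexHull ℝ _) h1 h2 ht0 (by linarith) (by ring)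

/-- STAB is down-closed. -/
lemma STAB_downward {n : ℕ} (G : SimpleGraph (Fin n)) {y z : Fin n → ℝ}
    (hy : y ∈ STAB G) (hz0 : ∀ v, 0 ≤ z v) (hzy : ∀ v, z v ≤ y v) : z ∈ STAB G := by
  have key : ∀ T : Finset (Fin n), (fun v => if v ∈ T then z v else y v) ∈ STAB G := by
    intro T
    induction T using Finset.induction_on with
    | empty => simpa using hy
    | @insert v T hvT ih =>
      set p : Fin n → ℝ := fun w => if w ∈ T then z w else y w with hp
      have hyv : 0 ≤ y v := le_trans (hz0 v) (hzy v)
      set t : ℝ := if y v = 0 then 0 else z v / y v with htdef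
      have ht0 : 0 ≤ t := by
        rw [htdef]; split
        · exact le_refl 0
        · exact div_nonneg (hz0 v) hyv
      have ht1 : t ≤ 1 := by
        rw [htdef]; split
        · linarith
        · rename_i h
          rw [div_le_one (lt_of_le_of_ne hyv (Ne.symm h))]
          exact hzy v
      have htv : t * y v = z v := by
        rw [htdef]; split
        · rename_i h
          have := hzy v
          rw [h] at this
          nlinarith [hz0 v]
        · rename_i h
          field_simp
      have := STAB_scale_coord G v t ht0 ht1 ih
      convert this using 1
      funext w
      by_cases h : w = v
      · subst h
        simp [Function.update_self, hp, hvT, htv.symm]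
      · simp [Function.update_of_ne h, hp, Finset.mem_insert, h]
  have := key Finset.univ
  simpa using this

theorem stmt3 {n d : ℕ} (G : SimpleGraph (Fin n)) (r : ℕ) (hd : 1 ≤ d) (hr : 1 ≤ r)
    (hchi : ∃ w : Finset (Fin n) → ℝ, IsFracColoring G w ∧ totalWeight w ≤ (d : ℝ) / r) :
    ∀ P : Fin n → Matrix (Fin d) (Fin d) ℂ,
      (∀ k, IsProjOfRank r (P k)) → Realizes G P →
        (fun k : Fin n =>
            ((P k * ((1 / (d : ℂ)) • (1 : Matrix (Fin d) (Fin d) ℂ))).trace).re) ∈ STAB G := by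
  intro P hP _hreal
  obtain ⟨w, ⟨hw0, hwind, hwcov⟩, hW⟩ := hchi
  have hd0 : (0:ℝ) < d := by exact_mod_cast hd
  have hr0 : (0:ℝ) < r := by exact_mod_cast hr
  set c : ℝ := (r : ℝ) / d with hc
  have hc0 : 0 ≤ c := le_of_lt (div_pos hr0 hd0)
  -- the components of the vector are all `r / d`
  have hval : ∀ k, ((P k * ((1 / (d : ℂ)) • (1 : Matrix (Fin d) (Fin d) ℂ))).trace).re = c := by
    intro k
    obtain ⟨hH, hI, hrk⟩ := hP k
    have htr : (P k).trace = (r : ℂ) := by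
      rw [trace_eq_rank_of_proj (P k) hH hI, hrk]
    rw [Matrix.mul_smul, Matrix.mul_one, Matrix.trace_smul, smul_eq_mul, htr]
    have : (1 / (d:ℂ)) * (r:ℂ) = ((c : ℝ) : ℂ) := by
      rw [hc]; push_cast; ring
    rw [this, Complex.ofReal_re]
  have hfun : (fun k : Fin n =>
      ((P k * ((1 / (d : ℂ)) • (1 : Matrix (Fin d) (Fin d) ℂ))).trace).re)
      = fun _ : Fin n => c := funext hval
  rw [hfun]
  -- a convex combination dominating the constant vector `c`
  set W : ℝ := totalWeight w with hWdef
  have hW0 : 0 ≤ W := Finset.sum_nonneg fun s _ => hw0 s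
  have hcW : c * W ≤ 1 := by
    calc c * W ≤ c * ((d:ℝ) / r) := mul_le_mul_of_nonneg_left hW hc0
    _ = 1 := by rw [hc]; field_simp
  set a : Finset (Fin n) → ℝ :=
    fun s => c * w s + (if s = ∅ then 1 - c * W else 0) with ha
  have ha0 : ∀ s, 0 ≤ a s := by
    intro s
    by_cases hse : s = ∅
    · have h1 : 0 ≤ c * w ∅ := mul_nonneg hc0 (hw0 ∅)
      simp [ha, hse]
      linarith
    · have h1 : 0 ≤ c * w s := mul_nonneg hc0 (hw0 s)
      simp [ha, hse, h1]
  have hasum : ∑ s : Finset (Fin n), a s = 1 := by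
    have h2 : ∑ s : Finset (Fin n), (if s = ∅ then 1 - c * W else 0) = 1 - c * W := by
      rw [Finset.sum_ite_eq' Finset.univ ∅ (fun _ => 1 - c * W)]; simp
    have h3 : ∑ s : Finset (Fin n), w s = W := by rw [hWdef, totalWeight]
    calc ∑ s : Finset (Fin n), a s
        = ∑ s : Finset (Fin n), (c * w s + if s = ∅ then 1 - c * W else 0) := rfl
    _ = c * ∑ s : Finset (Fin n), w s
          + ∑ s : Finset (Fin n), (if s = ∅ then 1 - c * W else 0) := by
        rw [Finset.sum_add_distrib, Finset.mul_sum]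
    _ = 1 := by rw [h2, h3]; ring
  set Y : Fin n → ℝ := ∑ s : Finset (Fin n), a s • incVec s with hY
  have hYmem : Y ∈ STAB G := by
    set t : Finset (Finset (Fin n)) := Finset.univ.filter (fun s => a s ≠ 0) with htdef
    have hzero : ∀ s ∈ Finset.univ, s ∉ t → a s • incVec s = 0 := by
      intro s _ hst
      simp only [htdef, Finset.mem_filter, Finset.mem_univ, true_and, not_not] at hst
      simp [hst]
    have hYt : Y = ∑ s ∈ t, a s • incVec s := by
      rw [hY]
      exact (Finset.sum_subset (Finset.filter_subset _ _) hzero).symm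
    have hzero' : ∀ s ∈ Finset.univ, s ∉ t → a s = 0 := by
      intro s _ hst
      simpa only [htdef, Finset.mem_filter, Finset.mem_univ, true_and, not_not] using hst
    have hasum' : ∑ s ∈ t, a s = 1 := by
      rw [Finset.sum_subset (Finset.filter_subset _ _) hzero', hasum]
    rw [hYt]
    refine Convex.sum_mem (convex_convexHull ℝ _) (fun s _ => ha0 s) hasum' ?_
    intro s hst
    simp only [htdef, Finset.mem_filter, Finset.mem_univ, true_and] at hst
    by_cases hse : s = ∅
    · subst hse
      exact incVec_mem_STAB (fun v hv => absurd hv (Finset.notMem_empty v))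
    · have hws : w s ≠ 0 := by
        intro h0
        apply hst
        rw [ha]
        simp [h0, hse]
      exact incVec_mem_STAB (hwind s hws)
  refine STAB_downward G hYmem (fun _ => hc0) ?_
  intro v
  have hYv : Y v = ∑ s : Finset (Fin n), a s * incVec s v := by
    rw [hY, Finset.sum_apply]
    simp
  rw [hYv]
  have hstep : ∀ s : Finset (Fin n),
      c * (if v ∈ s then w s else 0) ≤ a s * incVec s v := by
    intro s
    by_cases hv : v ∈ s
    · have hse : s ≠ ∅ := Finset.ne_empty_of_mem hv
      simp [hv, incVec, ha, hse]
    · simp [hv, incVec]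
  calc c = c * 1 := (mul_one c).symm
  _ ≤ c * ∑ s : Finset (Fin n), (if v ∈ s then w s else 0) :=
      mul_le_mul_of_nonneg_left (hwcov v) hc0
  _ = ∑ s : Finset (Fin n), c * (if v ∈ s then w s else 0) := Finset.mul_sum _ _ _
  _ ≤ ∑ s : Finset (Fin n), a s * incVec s v :=
      Finset.sum_le_sum fun s _ => hstep s
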